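/- If x is a global minimizer of f_G(y) = y^T(I + A_G)y over Δ_n and the support S of x contains an edge {i,j} of G, then {i,j} is a critical edge of G, i.e., α(G \ {i,j}) = α(G) + 1. -/

import Mathlib

open Matrix Finset
open scoped Classical

def IsStable {n : ℕ} (G : SimpleGraph (Fin n)) (S : Finset (Fin n)) : Prop :=
  ∀ i ∈ S, ∀ j ∈ S, ¬ G.Adj i j

noncomputable def alpha {n : ℕ} (G : SimpleGraph (Fin n)) : ℕ :=
  sSup {k | ∃ S : Finset (Fin n), IsStable G S ∧ S.card = k}

noncomputable def indic {n : ℕ} (S : Finset (Fin n)) : Fin n → ℝ :=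
  fun i => if i ∈ S then 1 else 0

noncomputable def qform {n : ℕ} (M : Matrix (Fin n) (Fin n) ℝ) (x : Fin n → ℝ) : ℝ :=
  x ⬝ᵥ M.mulVec x

noncomputable def fG {n : ℕ} (G : SimpleGraph (Fin n)) (x : Fin n → ℝ) : ℝ :=
  qform (1 + G.adjMatrix ℝ) x

noncomputable def globMin {n : ℕ} (f : (Fin n → ℝ) → ℝ) : Set (Fin n → ℝ) :=
  {x | x ∈ stdSimplex ℝ (Fin n) ∧ ∀ y ∈ stdSimplex ℝ (Fin n), f x ≤ f y}

section Aux

variable {n : ℕ}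

lemma qform_expand (M : Matrix (Fin n) (Fin n) ℝ) (x : Fin n → ℝ) :
    qform M x = ∑ a, ∑ b, x a * (M a b * x b) := by
  simp [qform, dotProduct, mulVec, Finset.mul_sum]

lemma bddAbove_alpha_set (G : SimpleGraph (Fin n)) :
    BddAbove {k | ∃ S : Finset (Fin n), IsStable G S ∧ S.card = k} := by
  refine ⟨n, fun k hk => ?_⟩
  obtain ⟨S, -, rfl⟩ := hk
  simpa using S.card_le_univ

lemma stable_card_le (G : SimpleGraph (Fin n)) {S : Finset (Fin n)} (hS : IsStable G S) :
    S.card ≤ alpha G :=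
  le_csSup (bddAbove_alpha_set G) ⟨S, hS, rfl⟩

lemma exists_max_stable (G : SimpleGraph (Fin n)) :
    ∃ S : Finset (Fin n), IsStable G S ∧ S.card = alpha G := by
  have h : alpha G ∈ {k | ∃ S : Finset (Fin n), IsStable G S ∧ S.card = k} := by
    apply Nat.sSup_mem
    · exact ⟨0, ∅, fun i hi => absurd hi (by simp), by simp⟩
    · exact bddAbove_alpha_set G
  exact h

lemma alpha_pos (G : SimpleGraph (Fin n)) (i : Fin n) : 1 ≤ alpha G := by
  have : IsStable G {i} := by
    intro a ha b hb
    simp only [Finset.mem_singleton] at ha hb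
    subst ha; subst hb; simp
  simpa using stable_card_le G this

lemma dot_mulVec_comm (M : Matrix (Fin n) (Fin n) ℝ) (hM : ∀ a b, M a b = M b a)
    (x z : Fin n → ℝ) : x ⬝ᵥ M.mulVec z = z ⬝ᵥ M.mulVec x := by
  simp only [dotProduct, mulVec, Finset.mul_sum]
  rw [Finset.sum_comm]
  refine Finset.sum_congr rfl fun a _ => Finset.sum_congr rfl fun b _ => ?_
  rw [hM b a]; ring

lemma qform_add_vec (M : Matrix (Fin n) (Fin n) ℝ) (hM : ∀ a b, M a b = M b a)
    (x z : Fin n → ℝ) :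
    qform M (x + z) = qform M x + 2 * (z ⬝ᵥ M.mulVec x) + qform M z := by
  have h := dot_mulVec_comm M hM x z
  simp only [qform, mulVec_add, dotProduct_add, add_dotProduct]
  rw [h]; ring

lemma qform_smul (M : Matrix (Fin n) (Fin n) ℝ) (c : ℝ) (x : Fin n → ℝ) :
    qform M (c • x) = c ^ 2 * qform M x := by
  simp only [qform, mulVec_smul, dotProduct_smul, smul_dotProduct, smul_eq_mul]
  ring

lemma sum_pair (f : Fin n → Fin n → ℝ) (i j : Fin n) :
    ∑ a, ∑ b, (if a = i ∧ b = j then f a b else 0) = f i j := by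
  simp [ite_and, Finset.sum_ite_eq']

end Aux

section Graph

variable {n : ℕ} (G : SimpleGraph (Fin n))

lemma symm_M : ∀ a b, (1 + G.adjMatrix ℝ) a b = (1 + G.adjMatrix ℝ) b a := by
  intro a b
  simp [Matrix.one_apply, SimpleGraph.adjMatrix_apply, G.adj_comm a b, eq_comm]

lemma M_adj {a b : Fin n} (h : G.Adj a b) : (1 + G.adjMatrix ℝ) a b = 1 := by
  simp [Matrix.one_apply, h.ne, h]

lemma M_diag (a : Fin n) : (1 + G.adjMatrix ℝ) a a = 1 := by simp

lemma qform_adj_eq_zero (x : Fin n → ℝ)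
    (h : ∀ a b, x a ≠ 0 → x b ≠ 0 → ¬ G.Adj a b) :
    qform (G.adjMatrix ℝ) x = 0 := by
  rw [qform_expand]
  refine Finset.sum_eq_zero fun a _ => Finset.sum_eq_zero fun b _ => ?_
  by_cases ha : x a = 0
  · simp [ha]
  by_cases hb : x b = 0
  · simp [hb]
  · simp [SimpleGraph.adjMatrix_apply, h a b ha hb]

lemma fG_split (x : Fin n → ℝ) :
    fG G x = (∑ a, x a ^ 2) + qform (G.adjMatrix ℝ) x := by
  simp only [fG, qform, Matrix.add_mulVec, dotProduct_add, Matrix.one_mulVec]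
  congr 1
  simp [dotProduct, sq]

end Graph

section MS

variable {n : ℕ}

lemma ms_aux (G : SimpleGraph (Fin n)) :
    ∀ k : ℕ, ∀ x : Fin n → ℝ, x ∈ stdSimplex ℝ (Fin n) →
      (Finset.univ.filter fun a => x a ≠ 0).card ≤ k → 1 / (alpha G : ℝ) ≤ fG G x := by
  intro k
  induction k with
  | zero =>
    intro x hx hcard
    exfalso
    have hS : (Finset.univ.filter fun a => x a ≠ 0) = ∅ :=
      Finset.card_eq_zero.mp (Nat.le_zero.mp hcard)
    have hz : ∀ a, x a = 0 := by
      intro a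
      by_contra h
      have : a ∈ Finset.univ.filter fun a => x a ≠ 0 := by simp [h]
      simp [hS] at this
    have h1 := hx.2
    rw [Finset.sum_congr rfl (fun a _ => hz a)] at h1
    simp at h1
  | succ k ih =>
    intro x hx hcard
    set S := Finset.univ.filter fun a => x a ≠ 0 with hSdef
    have hmemS : ∀ a, a ∈ S ↔ x a ≠ 0 := by intro a; simp [hSdef]
    by_cases hstab : IsStable G S
    · -- support is stable: f = ∑ x² ≥ 1/|S| ≥ 1/α
      have hsum : ∑ a ∈ S, x a = 1 := by
        rw [hSdef, Finset.sum_filter_ne_zero]; exact hx.2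
      have hcs : (1 : ℝ) ≤ (S.card : ℝ) * ∑ a ∈ S, x a ^ 2 := by
        have := sq_sum_le_card_mul_sum_sq (s := S) (f := x)
        rw [hsum] at this
        simpa using this
      have hq2 : (0:ℝ) ≤ ∑ a ∈ S, x a ^ 2 := Finset.sum_nonneg fun a _ => sq_nonneg _
      have hSpos : (0 : ℝ) < S.card := by
        by_contra h
        push_neg at h
        have : (S.card : ℝ) = 0 := le_antisymm h (by positivity)
        rw [this, zero_mul] at hcs; linarith
      have hfG : fG G x = (∑ a, x a ^ 2) + 0 := by
        rw [fG_split, qform_adj_eq_zero]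
        intro a b ha hb
        exact hstab a ((hmemS a).2 ha) b ((hmemS b).2 hb)
      have hle1 : ∑ a ∈ S, x a ^ 2 ≤ ∑ a, x a ^ 2 :=
        Finset.sum_le_sum_of_subset_of_nonneg (Finset.subset_univ S)
          (fun a _ _ => sq_nonneg _)
      have hcardle : (S.card : ℝ) ≤ (alpha G : ℝ) := by
        exact_mod_cast stable_card_le G hstab
      have h1 : 1 / (alpha G : ℝ) ≤ 1 / (S.card : ℝ) :=
        one_div_le_one_div_of_le hSpos hcardle
      have h2 : 1 / (S.card : ℝ) ≤ ∑ a ∈ S, x a ^ 2 := by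
        rw [div_le_iff₀ hSpos]
        linarith [hcs]
      rw [hfG]
      linarith
    · -- support contains an edge: shift mass along it
      obtain ⟨a, ha, b, hb, hab⟩ : ∃ a ∈ S, ∃ b ∈ S, G.Adj a b := by
        simp only [IsStable, not_forall] at hstab
        obtain ⟨a, ha, b, hb, h⟩ := hstab
        exact ⟨a, ha, b, hb, not_not.mp h⟩
      set M := 1 + G.adjMatrix ℝ with hM
      -- wlog the slope is nonnegative
      have key : ∃ a ∈ S, ∃ b ∈ S, G.Adj a b ∧
          0 ≤ (Pi.single a 1 - Pi.single b 1) ⬝ᵥ M.mulVec x := by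
        rcases le_or_gt 0 ((Pi.single a 1 - Pi.single b 1) ⬝ᵥ M.mulVec x) with h | h
        · exact ⟨a, ha, b, hb, hab, h⟩
        · refine ⟨b, hb, a, ha, hab.symm, ?_⟩
          have hneg : (Pi.single b 1 - Pi.single a 1 : Fin n → ℝ)
              = -(Pi.single a 1 - Pi.single b 1) := (neg_sub _ _).symm
          rw [hneg, neg_dotProduct]
          linarith
      clear ha hb hab
      obtain ⟨a, ha, b, hb, hab, hc⟩ := key
      have hxa : 0 < x a := lt_of_le_of_ne (hx.1 a) (Ne.symm ((hmemS a).1 ha))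
      set d : Fin n → ℝ := Pi.single a 1 - Pi.single b 1 with hd
      set y : Fin n → ℝ := x + (-(x a)) • d with hy
      have hqd : qform M d = 0 := by
        have : qform M d = M a a - M b a - (M a b - M b b) := by
          rw [hd]
          simp [qform, Matrix.mulVec_sub, Matrix.mulVec_single, sub_dotProduct,
            single_dotProduct, Pi.sub_apply]
        rw [this, hM, M_adj G hab, M_adj G hab.symm, M_diag, M_diag]
        ring
      have hshift : fG G y = fG G x + 2 * (-(x a)) * (d ⬝ᵥ M.mulVec x) := by
        rw [hy]
        have := qform_add_vec M (symm_M G) x ((-(x a)) • d)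
        rw [smul_dotProduct] at this
        have h2 : qform M ((-(x a)) • d) = (-(x a)) ^ 2 * qform M d := qform_smul M _ d
        rw [hqd, mul_zero] at h2
        simp only [fG, ← hM]
        rw [this, h2]
        simp only [smul_eq_mul]
        ring
      have hya : y a = 0 := by
        rw [hy, hd]
        simp [Pi.single_apply, hab.ne]
      have hyb : y b = x b + x a := by
        rw [hy, hd]
        simp [Pi.single_apply, hab.ne, Ne.symm hab.ne]
      have hyk : ∀ k, k ≠ a → k ≠ b → y k = x k := by
        intro k hka hkb
        rw [hy, hd]
        simp [Pi.single_apply, hka, hkb]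
      have hysimp : y ∈ stdSimplex ℝ (Fin n) := by
        constructor
        · intro k
          by_cases hka : k = a
          · rw [hka, hya]
          by_cases hkb : k = b
          · rw [hkb, hyb]; have := hx.1 b; linarith
          · rw [hyk k hka hkb]; exact hx.1 k
        · have hds : ∑ k, d k = 0 := by
            rw [hd]
            simp [Pi.sub_apply, Finset.sum_sub_distrib, Finset.sum_pi_single']
          rw [hy]
          simp only [Pi.add_apply, Pi.smul_apply, smul_eq_mul]
          rw [Finset.sum_add_distrib, ← Finset.mul_sum, hds, mul_zero, add_zero]
          exact hx.2
      have hsupp : (Finset.univ.filter fun k => y k ≠ 0) ⊆ S.erase a := by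
        intro k hk
        simp only [Finset.mem_filter, Finset.mem_univ, true_and] at hk
        have hka : k ≠ a := by
          intro h; rw [h, hya] at hk; exact hk rfl
        refine Finset.mem_erase.mpr ⟨hka, (hmemS k).2 ?_⟩
        by_cases hkb : k = b
        · rw [hkb]; exact (hmemS b).1 hb
        · rw [← hyk k hka hkb]; exact hk
      have hcard' : (Finset.univ.filter fun k => y k ≠ 0).card ≤ k := by
        have h1 := Finset.card_le_card hsupp
        have h2 : (S.erase a).card + 1 = S.card := Finset.card_erase_add_one ha
        omega
      have hIH := ih y hysimp hcard'
      have : fG G y ≤ fG G x := by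
        rw [hshift]
        nlinarith
      linarith

/-- the hard direction of Motzkin–Straus -/
lemma ms_hard (G : SimpleGraph (Fin n)) (x : Fin n → ℝ)
    (hx : x ∈ stdSimplex ℝ (Fin n)) : 1 / (alpha G : ℝ) ≤ fG G x :=
  ms_aux G (Finset.univ.filter fun a => x a ≠ 0).card x hx le_rfl

/-- the easy direction: there is a point attaining 1/α -/
lemma ms_easy (G : SimpleGraph (Fin n)) (i0 : Fin n) :
    ∃ z ∈ stdSimplex ℝ (Fin n), fG G z = 1 / (alpha G : ℝ) := by
  obtain ⟨S, hS, hcard⟩ := exists_max_stable G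
  have hα : 1 ≤ alpha G := alpha_pos G i0
  have hαR : (0:ℝ) < (alpha G : ℝ) := by exact_mod_cast hα
  refine ⟨(alpha G : ℝ)⁻¹ • indic S, ⟨?_, ?_⟩, ?_⟩
  · intro k
    simp only [Pi.smul_apply, smul_eq_mul, indic]
    by_cases h : k ∈ S <;> simp [h]
  · have hsum : ∑ k, indic S k = (S.card : ℝ) := by
      simp [indic, Finset.sum_ite_mem]
    simp only [Pi.smul_apply, smul_eq_mul]
    rw [← Finset.mul_sum, hsum, hcard]
    field_simp
  · have h1 : fG G (indic S) = (S.card : ℝ) := by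
      rw [fG_split]
      rw [qform_adj_eq_zero]
      · have : ∀ a, indic S a ^ 2 = if a ∈ S then 1 else 0 := by
          intro a; unfold indic; by_cases h : a ∈ S <;> simp [h]
        rw [Finset.sum_congr rfl fun a _ => this a]
        simp [Finset.sum_ite_mem]
      · intro a b ha hb
        apply hS
        · by_contra h; exact ha (by simp [indic, h])
        · by_contra h; exact hb (by simp [indic, h])
    have : fG G ((alpha G : ℝ)⁻¹ • indic S) = ((alpha G : ℝ)⁻¹) ^ 2 * fG G (indic S) := by
      unfold fG
      exact qform_smul _ _ _
    rw [this, h1, hcard]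
    field_simp

end MS

section Delete

variable {n : ℕ}

lemma fG_delete (G : SimpleGraph (Fin n)) (i j : Fin n) (hadj : G.Adj i j) (x : Fin n → ℝ) :
    fG G x = fG (G.deleteEdges {s(i,j)}) x + (x i * x j + x j * x i) := by
  set G' := G.deleteEdges {s(i,j)} with hG'
  rw [fG_split, fG_split]
  have key : ∀ a b : Fin n, x a * ((G.adjMatrix ℝ) a b * x b)
      = x a * ((G'.adjMatrix ℝ) a b * x b)
        + ((if a = i ∧ b = j then x a * x b else 0)
          + (if a = j ∧ b = i then x a * x b else 0)) := by
    intro a b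
    by_cases h1 : a = i ∧ b = j
    · obtain ⟨rfl, rfl⟩ := h1
      have hG'adj : ¬ G'.Adj a b := by
        rw [hG', SimpleGraph.deleteEdges_adj]
        simp
      simp only [SimpleGraph.adjMatrix_apply, if_pos hadj, if_neg hG'adj]
      simp [hadj.ne]
    by_cases h2 : a = j ∧ b = i
    · obtain ⟨rfl, rfl⟩ := h2
      have hG'adj : ¬ G'.Adj a b := by
        rw [hG', SimpleGraph.deleteEdges_adj]
        simp [Sym2.eq_swap]
      simp only [SimpleGraph.adjMatrix_apply, if_pos hadj.symm, if_neg hG'adj]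
      simp [hadj.symm.ne]
    · -- entries agree
      have : (G'.adjMatrix ℝ) a b = (G.adjMatrix ℝ) a b := by
        simp only [SimpleGraph.adjMatrix_apply, hG', SimpleGraph.deleteEdges_adj]
        by_cases hab : G.Adj a b
        · have : ¬ s(a, b) = s(i, j) := by
            intro h
            rw [Sym2.eq_iff] at h
            rcases h with ⟨h3, h4⟩ | ⟨h3, h4⟩
            · exact h1 ⟨h3, h4⟩
            · exact h2 ⟨h3, h4⟩
          simp [hab, this]
        · simp [hab]
      rw [this]
      simp [h1, h2]
  calc (∑ a, x a ^ 2) + qform (G.adjMatrix ℝ) x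
      = (∑ a, x a ^ 2) + qform (G'.adjMatrix ℝ) x + (x i * x j + x j * x i) := by
        rw [qform_expand, qform_expand]
        rw [Finset.sum_congr rfl fun a _ => Finset.sum_congr rfl fun b _ => key a b]
        simp only [Finset.sum_add_distrib]
        rw [sum_pair (fun a b => x a * x b) i j, sum_pair (fun a b => x a * x b) j i]
        ring
    _ = _ := by congr

end Delete

theorem stmt_6 (n : ℕ) (G : SimpleGraph (Fin n)) (x : Fin n → ℝ)
    (hmin : x ∈ globMin (fG G)) (i j : Fin n) (hadj : G.Adj i j)
    (hxi : x i ≠ 0) (hxj : x j ≠ 0) :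
    alpha (G.deleteEdges {s(i, j)}) = alpha G + 1 := by
  obtain ⟨hxS, hxmin⟩ := hmin
  set G' := G.deleteEdges {s(i,j)} with hG'
  have hle : alpha G ≤ alpha G' := by
    obtain ⟨S, hS, hcard⟩ := exists_max_stable G
    rw [← hcard]
    apply stable_card_le
    intro a ha b hb hadj'
    rw [hG', SimpleGraph.deleteEdges_adj] at hadj'
    exact hS a ha b hb hadj'.1
  have hub : alpha G' ≤ alpha G + 1 := by
    obtain ⟨S, hS, hcard⟩ := exists_max_stable G'
    have hstable : IsStable G (S.erase i) := by
      intro a ha b hb hab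
      have ha' := Finset.mem_of_mem_erase ha
      have hb' := Finset.mem_of_mem_erase hb
      have hne := hS a ha' b hb'
      rw [hG', SimpleGraph.deleteEdges_adj] at hne
      push_neg at hne
      have hmem := hne hab
      simp only [Set.mem_singleton_iff] at hmem
      rw [Sym2.eq_iff] at hmem
      rcases hmem with ⟨rfl, rfl⟩ | ⟨rfl, rfl⟩
      · exact (Finset.ne_of_mem_erase ha) rfl
      · exact (Finset.ne_of_mem_erase hb) rfl
    have h1 := stable_card_le G hstable
    have h2 : S.card ≤ (S.erase i).card + 1 := by
      by_cases h : i ∈ S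
      · rw [Finset.card_erase_add_one h]
      · rw [Finset.erase_eq_of_notMem h]; omega
    omega
  have hne : alpha G' ≠ alpha G := by
    intro heq
    have hxi' : 0 < x i := lt_of_le_of_ne (hxS.1 i) (Ne.symm hxi)
    have hxj' : 0 < x j := lt_of_le_of_ne (hxS.1 j) (Ne.symm hxj)
    have hdelta : fG G x = fG G' x + (x i * x j + x j * x i) := fG_delete G i j hadj x
    have h1 : 1 / (alpha G' : ℝ) ≤ fG G' x := ms_hard G' x hxS
    obtain ⟨z, hz, hzval⟩ := ms_easy G i
    have h2 : fG G x ≤ 1 / (alpha G : ℝ) := by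
      rw [← hzval]; exact hxmin z hz
    rw [heq] at h1
    nlinarith [mul_pos hxi' hxj']
  omega
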